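/- The space C^∞([0,1],ℝ), equipped with the seminorms μ_i(f) := max_{k ≤ i} sup_{x∈[0,1]} |f^{(k)}(x)|, is step-full: for every real s > 1 there exist M > 0 and v ∈ C^∞([0,1],ℝ) such that s^i < μ_i(v) < M·(4s)^i for every i ∈ ℕ. -/

import Mathlib

/-- The seminorm `μ_i(f) = max_{k ≤ i} sup_{x ∈ [0,1]} |f⁽ᵏ⁾(x)|` on smooth functions
on `[0,1]`, derivatives taken within `[0,1]`. -/
noncomputable def smoothIccSeminorm (i : ℕ) (f : ℝ → ℝ) : ℝ :=
  ⨆ k : Fin (i + 1), ⨆ x : Set.Icc (0:ℝ) 1,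
    |iteratedDerivWithin k f (Set.Icc (0:ℝ) 1) x|

lemma hasDerivAt_exp_mul (c x : ℝ) :
    HasDerivAt (fun y => Real.exp (c * y)) (c * Real.exp (c * x)) x := by
  have h1 : HasDerivAt (fun y : ℝ => c * y) c x := by
    simpa using (hasDerivAt_id x).const_mul c
  simpa [mul_comm, Function.comp_def] using (Real.hasDerivAt_exp (c * x)).comp x h1

lemma iterDerivWithin_exp_mul (c : ℝ) (k : ℕ) :
    ∀ x ∈ Set.Icc (0:ℝ) 1,
      iteratedDerivWithin k (fun y => Real.exp (c * y)) (Set.Icc (0:ℝ) 1) x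
        = c ^ k * Real.exp (c * x) := by
  have hu : UniqueDiffOn ℝ (Set.Icc (0:ℝ) 1) := uniqueDiffOn_Icc zero_lt_one
  induction k with
  | zero => intro x hx; simp
  | succ n ih =>
      intro x hx
      rw [iteratedDerivWithin_succ]
      have hcongr : Set.EqOn (iteratedDerivWithin n (fun y => Real.exp (c * y))
          (Set.Icc (0:ℝ) 1)) (fun y => c ^ n * Real.exp (c * y)) (Set.Icc (0:ℝ) 1) :=
        fun y hy => ih y hy
      rw [derivWithin_congr hcongr (ih x hx)]
      have h : HasDerivAt (fun y => c ^ n * Real.exp (c * y))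
          (c ^ (n + 1) * Real.exp (c * x)) x := by
        have := (hasDerivAt_exp_mul c x).const_mul (c ^ n)
        convert this using 1
        · rfl
        · rfl
        · ring
      exact (h.hasDerivWithinAt).derivWithin (hu x hx)

/-- `C^∞([0,1],ℝ)` with the seminorms `μ_i(f) = max_{k ≤ i} sup |f⁽ᵏ⁾|` is step-full:
for every `s > 1` there are `M > 0` and a smooth `v` with
`s ^ i < μ_i(v) < M * (4 s) ^ i` for every `i`. -/
theorem stmt17 :
    ∀ s : ℝ, 1 < s → ∃ M : ℝ, 0 < M ∧ ∃ v : ℝ → ℝ,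
      ContDiffOn ℝ (⊤ : ℕ∞) v (Set.Icc (0:ℝ) 1) ∧
      ∀ i : ℕ, s ^ i < smoothIccSeminorm i v ∧
        smoothIccSeminorm i v < M * (4 * s) ^ i := by
  intro s hs
  set c : ℝ := 2 * s with hc
  have hc1 : 1 < c := by nlinarith
  have hc0 : 0 < c := lt_trans one_pos hc1
  set v : ℝ → ℝ := fun y => Real.exp (c * y) with hv
  refine ⟨Real.exp c + 1, by positivity, v, ?_, ?_⟩
  · exact (Real.contDiff_exp.comp (contDiff_const.mul contDiff_id)).contDiffOn
  intro i
  have hne : (Set.Icc (0:ℝ) 1).Nonempty := Set.nonempty_Icc.mpr zero_le_one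
  haveI : Nonempty (Set.Icc (0:ℝ) 1) := hne.to_subtype
  -- bound on the derivative values
  have key : ∀ (k : ℕ) (x : Set.Icc (0:ℝ) 1),
      |iteratedDerivWithin k v (Set.Icc (0:ℝ) 1) x| = c ^ k * Real.exp (c * x) := by
    intro k x
    rw [iterDerivWithin_exp_mul c k x x.2]
    have : (0:ℝ) ≤ c ^ k * Real.exp (c * x) := by positivity
    exact abs_of_nonneg this
  have hbound : ∀ (k : Fin (i+1)) (x : Set.Icc (0:ℝ) 1),
      |iteratedDerivWithin (k : ℕ) v (Set.Icc (0:ℝ) 1) x| ≤ c ^ i * Real.exp c := by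
    intro k x
    rw [key]
    have h1 : c ^ (k : ℕ) ≤ c ^ i :=
      pow_le_pow_right₀ (le_of_lt hc1) (Nat.lt_succ_iff.mp k.2)
    have h2 : Real.exp (c * x) ≤ Real.exp c := by
      apply Real.exp_le_exp.mpr
      have := x.2.2
      nlinarith [x.2.1]
    have h3 : (0:ℝ) ≤ Real.exp (c * x) := (Real.exp_pos _).le
    nlinarith [pow_pos hc0 i, pow_nonneg hc0.le (k:ℕ)]
  -- upper bound
  have hub : smoothIccSeminorm i v ≤ c ^ i * Real.exp c := by
    apply ciSup_le
    intro k
    exact ciSup_le fun x => hbound k x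
  -- lower bound: value at k = i, x = 1
  have hlb : c ^ i * Real.exp c ≤ smoothIccSeminorm i v := by
    have h1 : (1:ℝ) ∈ Set.Icc (0:ℝ) 1 := Set.right_mem_Icc.mpr zero_le_one
    have hinner : c ^ i * Real.exp c ≤
        ⨆ x : Set.Icc (0:ℝ) 1, |iteratedDerivWithin i v (Set.Icc (0:ℝ) 1) x| := by
      have hb : BddAbove (Set.range fun x : Set.Icc (0:ℝ) 1 =>
          |iteratedDerivWithin i v (Set.Icc (0:ℝ) 1) x|) := by
        refine ⟨c ^ i * Real.exp c, ?_⟩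
        rintro _ ⟨x, rfl⟩
        exact hbound ⟨i, Nat.lt_succ_self i⟩ x
      have := le_ciSup hb (⟨1, h1⟩ : Set.Icc (0:ℝ) 1)
      calc c ^ i * Real.exp c
          = |iteratedDerivWithin i v (Set.Icc (0:ℝ) 1) (⟨1, h1⟩ : Set.Icc (0:ℝ) 1)| := by
            rw [key i ⟨1, h1⟩]; norm_num
        _ ≤ _ := this
    calc c ^ i * Real.exp c ≤ _ := hinner
      _ ≤ smoothIccSeminorm i v := by
        apply le_ciSup (f := fun k : Fin (i+1) =>
          ⨆ x : Set.Icc (0:ℝ) 1, |iteratedDerivWithin (k:ℕ) v (Set.Icc (0:ℝ) 1) x|)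
          (Set.Finite.bddAbove (Set.finite_range _)) (⟨i, Nat.lt_succ_self i⟩ : Fin (i+1))
  constructor
  · -- s ^ i < c ^ i * exp c ≤ μ_i
    have h1 : s ^ i ≤ c ^ i := by
      apply pow_le_pow_left₀ (le_of_lt (lt_trans one_pos hs))
      nlinarith
    have h2 : c ^ i < c ^ i * Real.exp c := by
      have := Real.one_lt_exp_iff.mpr hc0
      nlinarith [pow_pos hc0 i]
    exact lt_of_le_of_lt h1 (lt_of_lt_of_le h2 hlb)
  · -- μ_i ≤ c ^ i * exp c < M * (4s)^i
    have h1 : c ^ i ≤ (4 * s) ^ i := by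
      apply pow_le_pow_left₀ hc0.le
      nlinarith
    have h2 : (0:ℝ) < (4 * s) ^ i := by positivity
    have h3 : c ^ i * Real.exp c < (Real.exp c + 1) * (4 * s) ^ i := by
      nlinarith [(Real.exp_pos c).le]
    exact lt_of_le_of_lt hub h3
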